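/- For every n there exists a bijection ψ of the symmetric group S_n such that for all σ ∈ S_n: des(σ) = lec(ψ(σ)), and the rightmost hook in the hook factorization of ψ(σ) has the same length and the same set of entries as the special wave sw(σ) of σ. -/

import Mathlib

namespace Paper

/-- number of descents of a word -/
def des : List ℕ → ℕ
  | a :: b :: t => (if b < a then 1 else 0) + des (b :: t)
  | _ => 0

/-- number of inversions of a word -/
def inv : List ℕ → ℕ
  | [] => 0
  | a :: t => (t.countP fun x => decide (x < a)) + inv t

/-- a word is (strictly) increasing -/
def Incr (w : List ℕ) : Prop := w.Chain' (· < ·)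

/-- a word is a hook: `a₁ > a₂` and `a₂ < a₃ < ⋯ < a_s`, length ≥ 2 -/
def IsHook : List ℕ → Prop
  | a :: b :: t => b < a ∧ (b :: t).Chain' (· < ·)
  | _ => False

/-- `(γ, hs)` is the hook factorization data of `w` -/
def IsHookFact (w γ : List ℕ) (hs : List (List ℕ)) : Prop :=
  Incr γ ∧ (∀ h ∈ hs, IsHook h) ∧ w = γ ++ hs.flatten

/-- the statistic `lec` computed from the hooks of a factorization -/
def lecVal (hs : List (List ℕ)) : ℕ := (hs.map inv).sum

/-- one-line word of `σ ∈ S_n`, with entries in `[1..n]` -/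
def word {n : ℕ} (σ : Equiv.Perm (Fin n)) : List ℕ :=
  List.ofFn fun i => (σ i : ℕ) + 1

/-- a word `w₁ ⋯ w_ℓ` with maximum in position `c` is a (nontrivial) reverse wave if
`c ≠ ℓ` and `w₁ < ⋯ < w_{c-1} < w_ℓ < w_{ℓ-1} < ⋯ < w_c`. -/
def IsRevWave (w : List ℕ) : Prop :=
  ∃ c, c + 1 < w.length ∧ (w.take c ++ (w.drop c).reverse).Chain' (· < ·)

/-- a word `w₁ ⋯ w_ℓ` with maximum in position `c` is a (nontrivial) wave if
`c ≠ ℓ` and `w_ℓ < w_{ℓ-1} < ⋯ < w_{c+1} < w₁ < ⋯ < w_c`. -/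
def IsWave (w : List ℕ) : Prop :=
  ∃ c, c + 1 < w.length ∧ ((w.drop (c + 1)).reverse ++ w.take (c + 1)).Chain' (· < ·)

/-- the maximal strictly decreasing run starting below `hi` and staying above `lo` -/
def decRun (hi lo : ℕ) : List ℕ → List ℕ
  | [] => []
  | b :: t => if b < hi ∧ lo < b then b :: decRun b lo t else []

def srwAux (lo : ℕ) : List ℕ → List ℕ
  | [] => []
  | [a] => [a]
  | a :: b :: t => if a < b then a :: srwAux a (b :: t) else a :: decRun a lo (b :: t)

/-- the special reverse wave of a word: the prefix `w₁ ⋯ w_s` where `t` is the position of the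
first descent (the whole word if none) and `s ≥ t` is maximal with
`w_t > w_{t+1} > ⋯ > w_s > w_{t-1}` (convention `w₀ = 0`). -/
def srw (w : List ℕ) : List ℕ := srwAux 0 w

/-- the number of special reverse descents: `des (srw w) + χ(w_s > w_{s+1})` -/
def srdes (w : List ℕ) : ℕ :=
  des (srw w) +
    match (srw w).getLast?, (w.drop (srw w).length).head? with
    | some x, some y => if y < x then 1 else 0
    | _, _ => 0

/-- the prefix `w₁ ⋯ w_t` of `w` ending at the position `t` of the first descent
(the whole word if there is no descent) -/
def incrPrefix : List ℕ → List ℕ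
  | [] => []
  | [a] => [a]
  | a :: b :: t => if a < b then a :: incrPrefix (b :: t) else [a]

/-- the special wave `w_r ⋯ w_t ⋯ w_s` of a word -/
def sw (w : List ℕ) : List ℕ :=
  let pre := incrPrefix w
  match w.drop pre.length with
  | [] => w
  | x :: rs =>
    let kept := pre.takeWhile fun u => decide (u < x)
    pre.drop kept.length ++ x :: decRun x (kept.getLastD 0) rs

/-- the word `w \ sw(w) = w₁ ⋯ w_{r-1} w_{s+1} ⋯ w_ℓ` obtained removing the special wave -/
def swCompl (w : List ℕ) : List ℕ :=
  let pre := incrPrefix w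
  match w.drop pre.length with
  | [] => []
  | x :: rs =>
    let kept := pre.takeWhile fun u => decide (u < x)
    kept ++ rs.drop (decRun x (kept.getLastD 0) rs).length

/-- insertion `ins(a,b) = a₁ ⋯ a_x b₁ ⋯ b_q a_{x+1} ⋯ a_p`, where `x` is maximal with
`a₁ < a₂ < ⋯ < a_x < b_q` -/
def ins (a b : List ℕ) : List ℕ :=
  let pfx := (incrPrefix a).takeWhile fun u => decide (u < b.getLastD 0)
  pfx ++ b ++ a.drop pfx.length

/-- the word `ρ = ρ₁ ⋯ ρ_m` (entries in `[1..n]`) associated to an injection `Fin m ↪ Fin n` -/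
def rho {n m : ℕ} (f : Fin m ↪ Fin n) : List ℕ :=
  List.ofFn fun j => (f j : ℕ) + 1

/-- descent number of the pair `(α₀, ρ)`: `des ρ + #{a ∈ α₀ : a > ρ₁}`,
where `α₀ = [n] \ {ρ₁, …, ρ_m}` -/
def desPair (n : ℕ) {m : ℕ} (f : Fin m ↪ Fin n) : ℕ :=
  des (rho f) + ((Finset.Icc 1 n).filter fun a => a ∉ rho f ∧ (rho f).headI < a).card

/-- descent number of the pair `(α₀, ρ)`, with `ρ` given as a list -/
def desPairL (n : ℕ) (ρ : List ℕ) : ℕ :=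
  des ρ + ((Finset.Icc 1 n).filter fun a => a ∉ ρ ∧ ρ.headI < a).card

/-- the map `μ`, sending `ρ` (with complementary set `α₀ = {α₁ < ⋯ < α_{n-k-1}}`) to
`α₁ ⋯ α_{n-k-m-1} α_{n-k-1} α_{n-k-2} ⋯ α_{n-k-m} ρ₁ ⋯ ρ_{k+1}`,
where `m = #{a ∈ α₀ : a > ρ₁}` -/
def mu (n : ℕ) (ρ : List ℕ) : List ℕ :=
  let A := ((Finset.Icc 1 n).filter fun a => a ∉ ρ).sort (· ≤ ·)
  let m := (A.filter fun a => decide (ρ.headI < a)).length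
  (A.take (A.length - m) ++ (A.drop (A.length - m)).reverse) ++ ρ

open List

set_option linter.deprecated false in
theorem chain'_cons {R : ℕ → ℕ → Prop} {x y : ℕ} {l : List ℕ} :
    Chain' R (x :: y :: l) ↔ R x y ∧ Chain' R (y :: l) := isChain_cons_cons

set_option linter.deprecated false in
theorem chain'_cons' {R : ℕ → ℕ → Prop} {x : ℕ} {l : List ℕ} :
    Chain' R (x :: l) ↔ (∀ y ∈ head? l, R x y) ∧ Chain' R l := isChain_cons

set_option linter.deprecated false in
theorem chain'_iff_pairwise {R : ℕ → ℕ → Prop} [Trans R R R] {l : List ℕ} :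
    Chain' R l ↔ Pairwise R l := isChain_iff_pairwise

set_option linter.deprecated false in
theorem chain'_append {R : ℕ → ℕ → Prop} {l₁ l₂ : List ℕ} :
    Chain' R (l₁ ++ l₂) ↔ Chain' R l₁ ∧ Chain' R l₂ ∧
      ∀ x ∈ l₁.getLast?, ∀ y ∈ l₂.head?, R x y := isChain_append

set_option linter.deprecated false in
theorem chain'_reverse {R : ℕ → ℕ → Prop} {l : List ℕ} :
    Chain' R (reverse l) ↔ Chain' (fun a b => R b a) l := isChain_reverse

set_option linter.deprecated false in
@[simp] theorem chain'_nil' {R : ℕ → ℕ → Prop} : Chain' R [] := IsChain.nil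

set_option linter.deprecated false in
@[simp] theorem chain'_singleton' {R : ℕ → ℕ → Prop} (a : ℕ) : Chain' R [a] := List.IsChain.singleton a

set_option linter.deprecated false in
theorem _root_.List.Chain'.sublist {R : ℕ → ℕ → Prop} [Trans R R R] {l₁ l₂ : List ℕ}
    (hl : Chain' R l₂) (h : l₁ <+ l₂) : Chain' R l₁ := IsChain.sublist hl h


/-! ### des lemmas -/

@[simp] lemma des_nil : des [] = 0 := rfl
@[simp] lemma des_single (a : ℕ) : des [a] = 0 := rfl
lemma des_cons₂ (a b : ℕ) (t : List ℕ) :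
    des (a :: b :: t) = (if b < a then 1 else 0) + des (b :: t) := rfl

lemma des_append (u : List ℕ) (a : ℕ) (v : List ℕ) :
    des (u ++ a :: v) = des u + des (a :: v) + (if a < u.getLastD 0 then 1 else 0) := by
  induction u with
  | nil => simp
  | cons b u ih =>
    cases u with
    | nil => simp [des_cons₂]; omega
    | cons c u' =>
      simp only [cons_append] at ih ⊢
      rw [des_cons₂ b c (u' ++ a :: v), des_cons₂ b c u', ih]
      simp only [getLastD_cons]
      omega

lemma des_eq_zero_of_chain {w : List ℕ} (h : Chain' (· < ·) w) : des w = 0 := by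
  induction w with
  | nil => rfl
  | cons a t ih =>
    cases t with
    | nil => rfl
    | cons b t' =>
      rw [chain'_cons] at h
      rw [des_cons₂, ih h.2]
      simp [Nat.not_lt.2 (le_of_lt h.1)]

lemma chain_of_des_eq_zero {w : List ℕ} (h : des w = 0) (hn : w.Nodup) :
    Chain' (· < ·) w := by
  induction w with
  | nil => exact IsChain.nil
  | cons a t ih =>
    cases t with
    | nil => simp
    | cons b t' =>
      rw [des_cons₂] at h
      rw [chain'_cons]
      have hab : a ≠ b := by simp [Nodup] at hn; tauto
      constructor
      · by_contra hba
        have : b < a ∨ a < b := by omega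
        rcases this with h1 | h1
        · simp [h1] at h
        · exact hba h1
      · exact ih (by omega) hn.of_cons

lemma des_of_chain_gt {w : List ℕ} (h : Chain' (· > ·) w) : des w = w.length - 1 := by
  induction w with
  | nil => rfl
  | cons a t ih =>
    cases t with
    | nil => rfl
    | cons b t' =>
      rw [chain'_cons] at h
      rw [des_cons₂, ih h.2]
      simp only [if_pos h.1]
      simp
      omega

/-! ### inv lemmas -/

lemma inv_eq_zero_of_chain {w : List ℕ} (h : Chain' (· < ·) w) : inv w = 0 := by
  induction w with
  | nil => rfl
  | cons a t ih =>
    rw [chain'_iff_pairwise, pairwise_cons] at h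
    have ht : Chain' (· < ·) t := chain'_iff_pairwise.2 h.2
    show t.countP (fun x => decide (x < a)) + inv t = 0
    rw [ih ht, countP_eq_zero.2]
    intro x hx
    simp only [decide_eq_true_eq]
    exact Nat.not_lt.2 (le_of_lt (h.1 x hx))

/-! ### decRun lemmas -/

lemma decRun_prefix (hi lo : ℕ) (t : List ℕ) : decRun hi lo t <+: t := by
  induction t generalizing hi with
  | nil => simp [decRun]
  | cons b t' ih =>
    rw [decRun]
    split
    · exact cons_prefix_cons.2 ⟨rfl, ih b⟩
    · exact nil_prefix

lemma decRun_chain (hi lo : ℕ) (t : List ℕ) : Chain' (· > ·) (hi :: decRun hi lo t) := by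
  induction t generalizing hi with
  | nil => simp [decRun]
  | cons b t' ih =>
    rw [decRun]
    split
    · rename_i h
      exact chain'_cons.2 ⟨h.1, ih b⟩
    · simp

lemma decRun_mem (hi lo : ℕ) (t : List ℕ) : ∀ y ∈ decRun hi lo t, lo < y ∧ y < hi := by
  induction t generalizing hi with
  | nil => simp [decRun]
  | cons b t' ih =>
    rw [decRun]
    split
    · rename_i h
      intro y hy
      rcases mem_cons.1 hy with rfl | hy
      · exact ⟨h.2, h.1⟩
      · have := ih b y hy
        exact ⟨this.1, this.2.trans h.1⟩
    · simp

lemma decRun_stop (hi lo : ℕ) (t : List ℕ) :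
    ∀ y, (t.drop (decRun hi lo t).length).head? = some y →
      (decRun hi lo t).getLastD hi ≤ y ∨ y ≤ lo := by
  induction t generalizing hi with
  | nil => simp
  | cons b t' ih =>
    by_cases hb : b < hi ∧ lo < b
    · rw [decRun, if_pos hb]
      intro y hy
      simp only [length_cons, drop_succ_cons] at hy
      rw [getLastD_cons]
      exact ih b y hy
    · rw [decRun, if_neg hb]
      intro y hy
      simp only [length_nil, drop_zero, head?_cons, Option.some.injEq] at hy
      subst hy
      simp only [getLastD_nil]
      omega

/-! ### incrPrefix lemmas -/

lemma incrPrefix_chain (w : List ℕ) : Chain' (· < ·) (incrPrefix w) := by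
  induction w with
  | nil => simp [incrPrefix]
  | cons a t ih =>
    cases t with
    | nil => simp [incrPrefix]
    | cons b t' =>
      rw [incrPrefix]
      split
      · rename_i h
        refine chain'_cons'.2 ⟨?_, ih⟩
        intro y hy
        have : (incrPrefix (b :: t')).head? = some b := by
          cases t' <;> simp [incrPrefix] <;> split <;> simp
        rw [this] at hy
        cases hy; exact h
      · simp

lemma incrPrefix_head (w : List ℕ) : (incrPrefix w).head? = w.head? := by
  cases w with
  | nil => rfl
  | cons a t => cases t <;> simp [incrPrefix] <;> split <;> simp

lemma incrPrefix_prefix (w : List ℕ) : incrPrefix w <+: w := by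
  induction w with
  | nil => simp [incrPrefix]
  | cons a t ih =>
    cases t with
    | nil => simp [incrPrefix]
    | cons b t' =>
      rw [incrPrefix]
      split
      · exact cons_prefix_cons.2 ⟨rfl, ih⟩
      · exact ⟨b :: t', rfl⟩

lemma incrPrefix_append_drop (w : List ℕ) :
    incrPrefix w ++ w.drop (incrPrefix w).length = w := by
  have h := incrPrefix_prefix w
  rw [prefix_iff_eq_take] at h
  conv_rhs => rw [← take_append_drop (incrPrefix w).length w, ← h]

lemma incrPrefix_stop (w : List ℕ) :
    ∀ y, (w.drop (incrPrefix w).length).head? = some y → y ≤ (incrPrefix w).getLastD 0 := by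
  induction w with
  | nil => simp
  | cons a t ih =>
    cases t with
    | nil => simp [incrPrefix]
    | cons b t' =>
      rw [incrPrefix]
      split
      · rename_i h
        intro y hy
        simp only [length_cons, getLastD_cons] at *
        have hne : incrPrefix (b :: t') ≠ [] := by
          cases t' <;> simp [incrPrefix] <;> split <;> simp
        have := ih y (by simpa using hy)
        rw [getLastD_eq_getLast?, getLast?_eq_getLast hne] at this ⊢
        simpa using this
      · rename_i h
        intro y hy
        simp only [length_cons, length_nil, drop_succ_cons, drop_zero, head?_cons,
          Option.some.injEq] at hy
        subst hy
        simp only [getLastD_cons, getLastD_nil]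
        omega

lemma incrPrefix_eq_self {w : List ℕ} (h : Chain' (· < ·) w) : incrPrefix w = w := by
  induction w with
  | nil => rfl
  | cons a t ih =>
    cases t with
    | nil => rfl
    | cons b t' =>
      rw [chain'_cons] at h
      rw [incrPrefix, if_pos h.1, ih h.2]

lemma des_eq_zero_of_drop_nil {w : List ℕ} (h : w.drop (incrPrefix w).length = []) :
    des w = 0 := by
  have h2 := incrPrefix_append_drop w
  rw [h, append_nil] at h2
  exact des_eq_zero_of_chain (h2 ▸ incrPrefix_chain w)

lemma incrPrefix_append_exists {P : List ℕ} (T : List ℕ) (hP : Chain' (· < ·) P) :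
    ∃ E, incrPrefix (P ++ T) = P ++ E ∧ ∀ y, E.head? = some y → T.head? = some y := by
  induction P with
  | nil =>
    refine ⟨incrPrefix T, by simp, fun y hy => ?_⟩
    rwa [incrPrefix_head] at hy
  | cons p P' ih =>
    cases P' with
    | nil =>
      cases T with
      | nil => exact ⟨[], by simp [incrPrefix], by simp⟩
      | cons y T' =>
        simp only [singleton_append, incrPrefix]
        split
        · refine ⟨incrPrefix (y :: T'), rfl, fun z hz => ?_⟩
          rwa [incrPrefix_head] at hz
        · exact ⟨[], by simp, by simp⟩
    | cons q P'' =>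
      rw [chain'_cons] at hP
      obtain ⟨E, hE, hhead⟩ := ih hP.2
      refine ⟨E, ?_, hhead⟩
      rw [cons_append, cons_append, incrPrefix, if_pos hP.1,
        show q :: (P'' ++ T) = (q :: P'') ++ T from rfl, hE]
      simp



/-! ### helpers -/

lemma drop_length_takeWhile (p : ℕ → Bool) (l : List ℕ) :
    l.drop (l.takeWhile p).length = l.dropWhile p := by
  induction l with
  | nil => rfl
  | cons a t ih =>
    by_cases hp : p a
    · simp [takeWhile_cons, dropWhile_cons, hp, ih]
    · simp [takeWhile_cons, dropWhile_cons, hp]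

lemma dropWhile_head_not (p : ℕ → Bool) (l : List ℕ) {a : ℕ} {t : List ℕ}
    (h : l.dropWhile p = a :: t) : p a = false := by
  induction l with
  | nil => simp at h
  | cons b t' ih =>
    by_cases hp : p b
    · rw [dropWhile_cons, if_pos hp] at h
      exact ih h
    · rw [dropWhile_cons, if_neg hp] at h
      cases h
      simpa using hp

lemma takeWhile_append_of (p : ℕ → Bool) (l₁ l₂ : List ℕ) (h : ∀ x ∈ l₁, p x = true) :
    (l₁ ++ l₂).takeWhile p = l₁ ++ l₂.takeWhile p := by
  induction l₁ with
  | nil => rfl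
  | cons a t ih =>
    rw [cons_append, takeWhile_cons_of_pos (h a (mem_cons_self)), cons_append,
      ih fun x hx => h x (mem_cons_of_mem _ hx)]

lemma getLastD_mem {l : List ℕ} (h : l ≠ []) (d : ℕ) : l.getLastD d ∈ l := by
  rw [getLastD_eq_getLast?, getLast?_eq_getLast h]
  exact getLast_mem h

lemma getLastD_append_right {u v : List ℕ} (h : v ≠ []) (d : ℕ) :
    (u ++ v).getLastD d = v.getLastD d := by
  rw [getLastD_eq_getLast?, getLastD_eq_getLast?, getLast?_append, getLast?_eq_getLast h]
  rfl

lemma le_getLastD_of_chain {l : List ℕ} (h : List.Chain' (· < ·) l) :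
    ∀ p ∈ l, ∀ d, p ≤ l.getLastD d := by
  induction l with
  | nil => simp
  | cons a t ih =>
    intro p hp d
    cases t with
    | nil =>
      simp only [mem_singleton] at hp
      subst hp; simp [getLastD]
    | cons b t' =>
      rw [chain'_cons] at h
      rw [getLastD_cons]
      rcases mem_cons.1 hp with rfl | hp'
      · exact le_of_lt (lt_of_lt_of_le h.1 (ih h.2 b (mem_cons_self) p))
      · exact ih h.2 p hp' a

lemma chain_append_last_lt {P E' : List ℕ} {y : ℕ}
    (h : List.Chain' (· < ·) (P ++ y :: E')) (hP : P ≠ []) : P.getLastD 0 < y := by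
  rw [chain'_append] at h
  refine h.2.2 _ ?_ y rfl
  rw [getLastD_eq_getLast?, getLast?_eq_getLast hP]
  rfl

lemma sw_eq (w : List ℕ) (x : ℕ) (rs : List ℕ) (h : w.drop (incrPrefix w).length = x :: rs) :
    sw w = (incrPrefix w).drop (((incrPrefix w).takeWhile fun u => decide (u < x)).length)
      ++ x :: decRun x (((incrPrefix w).takeWhile fun u => decide (u < x)).getLastD 0) rs := by
  simp only [sw]
  rw [h]

lemma swCompl_eq (w : List ℕ) (x : ℕ) (rs : List ℕ)
    (h : w.drop (incrPrefix w).length = x :: rs) :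
    swCompl w = ((incrPrefix w).takeWhile fun u => decide (u < x))
      ++ rs.drop (decRun x ((((incrPrefix w).takeWhile fun u => decide (u < x))).getLastD 0) rs).length := by
  simp only [swCompl]
  rw [h]

lemma sw_eq_self {w : List ℕ} (h : w.drop (incrPrefix w).length = []) : sw w = w := by
  simp only [sw]
  rw [h]

/-! ### the wave decomposition -/

structure WD (w P inc dec T : List ℕ) : Prop where
  hweq : w = P ++ inc ++ dec ++ T
  hsw : sw w = inc ++ dec
  hsc : swCompl w = P ++ T
  hPinc : List.Chain' (· < ·) (P ++ inc)
  hdec : List.Chain' (· > ·) dec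
  hinc0 : inc ≠ []
  hdec0 : dec ≠ []
  hlt : ∀ y ∈ dec, ∀ u ∈ inc, y < u
  hPdec : ∀ p ∈ P, ∀ y ∈ dec, p < y
  hbound : ∀ y, T.head? = some y → dec.getLastD 0 ≤ y ∨ y ≤ P.getLastD 0

lemma wd_exists {w : List ℕ} (hdes : des w ≠ 0) (hnd : w.Nodup) :
    ∃ P inc dec T, WD w P inc dec T := by
  obtain ⟨x, rs, hxrs⟩ : ∃ x rs, w.drop (incrPrefix w).length = x :: rs := by
    cases h : w.drop (incrPrefix w).length with
    | nil => exact absurd (des_eq_zero_of_drop_nil h) hdes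
    | cons x rs => exact ⟨x, rs, rfl⟩
  have hsww := sw_eq w x rs hxrs
  have hscc := swCompl_eq w x rs hxrs
  set pre := incrPrefix w with hpre
  set P := pre.takeWhile (fun u => decide (u < x)) with hPdef
  set inc := pre.drop P.length with hincdef
  set lo := P.getLastD 0 with hlodef
  set D := decRun x lo rs with hDdef
  set T := rs.drop D.length with hTdef
  have hpresplit : pre = P ++ inc := by
    have h1 : P = pre.take P.length := prefix_iff_eq_take.1 (takeWhile_prefix _)
    conv_lhs => rw [← take_append_drop P.length pre]
    rw [← h1]
  have hincdw : inc = pre.dropWhile (fun u => decide (u < x)) := by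
    rw [hincdef, hPdef, drop_length_takeWhile]
  have hrs : rs = D ++ T := by
    have h1 : D = rs.take D.length := prefix_iff_eq_take.1 (decRun_prefix x lo rs)
    conv_lhs => rw [← take_append_drop D.length rs]
    rw [← h1]
  have hw2 : w = pre ++ x :: rs := by
    conv_lhs => rw [← incrPrefix_append_drop w]
    rw [hxrs]
  have hweq : w = P ++ inc ++ (x :: D) ++ T := by
    rw [hw2, hpresplit]
    conv_lhs => rw [hrs]
    simp
  have hchainpre : List.Chain' (· < ·) pre := incrPrefix_chain w
  have hwne : w ≠ [] := by rintro rfl; exact hdes rfl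
  have hprene : pre ≠ [] := by
    intro h
    have h2 := incrPrefix_head w
    rw [← hpre, h] at h2
    cases w with
    | nil => exact hwne rfl
    | cons a t => simp at h2
  have hnd2 : List.Nodup (pre ++ x :: rs) := hw2 ▸ hnd
  have hxpre : x ∉ pre := by
    intro hx
    rw [List.nodup_append] at hnd2
    exact hnd2.2.2 x hx x mem_cons_self rfl
  have hmempre : ∀ u ∈ inc, u ∈ pre := by
    intro u hu; rw [hpresplit]; exact mem_append_right _ hu
  have hchaininc : List.Chain' (· < ·) inc := by
    rw [hpresplit] at hchainpre
    exact hchainpre.sublist (sublist_append_right P inc)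
  have hPchain : List.Chain' (· < ·) P := by
    rw [hpresplit] at hchainpre
    exact hchainpre.sublist (sublist_append_left P inc)
  have hincx : ∀ u ∈ inc, x < u := by
    cases hi : inc with
    | nil => simp
    | cons h0 inc' =>
      have hh0f : decide (h0 < x) = false := by
        apply dropWhile_head_not (fun u => decide (u < x)) pre
        rw [← hincdw, hi]
      have hxh0 : x < h0 := by
        have h1 : ¬ h0 < x := by simpa using hh0f
        have h2 : h0 ∈ pre := hmempre h0 (hi ▸ mem_cons_self)
        have h3 : x ≠ h0 := fun he => hxpre (he ▸ h2)
        omega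
      intro u hu
      rcases mem_cons.1 hu with rfl | hu
      · exact hxh0
      · exact hxh0.trans (rel_of_pairwise_cons (chain'_iff_pairwise.1 (hi ▸ hchaininc)) hu)
  have hPx : ∀ p ∈ P, p < x := fun p hp => by simpa using mem_takeWhile_imp hp
  have hinc0 : inc ≠ [] := by
    intro h0
    have hPeq : pre = P := by rw [hpresplit, h0, append_nil]
    have hstop : x ≤ pre.getLastD 0 := by
      refine incrPrefix_stop w x ?_
      rw [← hpre, hxrs]
      rfl
    have hmem : pre.getLastD 0 ∈ P := hPeq ▸ getLastD_mem hprene 0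
    have := hPx _ hmem
    omega
  have hlt : ∀ y ∈ x :: D, ∀ u ∈ inc, y < u := by
    intro y hy u hu
    rcases mem_cons.1 hy with rfl | hy
    · exact hincx u hu
    · exact ((decRun_mem x lo rs y hy).2).trans (hincx u hu)
  have hPdec' : ∀ p ∈ P, ∀ y ∈ x :: D, p < y := by
    intro p hp y hy
    rcases mem_cons.1 hy with rfl | hy
    · exact hPx p hp
    · have h1 : lo < y := (decRun_mem x lo rs y hy).1
      have h2 : p ≤ lo := le_getLastD_of_chain hPchain p hp 0
      omega
  have hbound : ∀ y, T.head? = some y → (x :: D).getLastD 0 ≤ y ∨ y ≤ P.getLastD 0 := by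
    intro y hy
    rw [hTdef] at hy
    have := decRun_stop x lo rs y hy
    rw [getLastD_cons]
    exact this
  exact ⟨P, inc, x :: D, T, ⟨hweq, hsww, hscc, hpresplit ▸ hchainpre, decRun_chain x lo rs,
    hinc0, cons_ne_nil _ _, hlt, hPdec', hbound⟩⟩



lemma wd_des {w P inc dec T : List ℕ} (h : WD w P inc dec T) (hnd : w.Nodup)
    (hpos : ∀ a ∈ w, 0 < a) :
    des w = des (swCompl w) + des (sw w) ∧ des (sw w) = dec.length := by
  obtain ⟨c, dec', rfl⟩ : ∃ c dec', dec = c :: dec' := by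
    cases dec with
    | nil => exact absurd rfl h.hdec0
    | cons c d => exact ⟨c, d, rfl⟩
  have hglinc : inc.getLastD 0 ∈ inc := getLastD_mem h.hinc0 0
  have hcgl : c < inc.getLastD 0 := h.hlt c (mem_cons_self) _ hglinc
  have hdesPinc : des (P ++ inc) = 0 := des_eq_zero_of_chain h.hPinc
  have hchaininc : List.Chain' (· < ·) inc := h.hPinc.sublist (sublist_append_right P inc)
  have hchainP : List.Chain' (· < ·) P := h.hPinc.sublist (sublist_append_left P inc)
  have hdesinc : des inc = 0 := des_eq_zero_of_chain hchaininc
  have hdesP : des P = 0 := des_eq_zero_of_chain hchainP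
  have hdesdec : des (c :: dec') = dec'.length := by
    have := des_of_chain_gt h.hdec
    simpa using this
  have hdsw : des (sw w) = dec'.length + 1 := by
    rw [h.hsw, des_append inc c dec', hdesinc, hdesdec, if_pos hcgl]
    omega
  have hw : w = (P ++ inc) ++ c :: (dec' ++ T) := by rw [h.hweq]; simp
  have hglPinc : (P ++ inc).getLastD 0 = inc.getLastD 0 := getLastD_append_right h.hinc0 0
  have hdesw : des w = des (c :: (dec' ++ T)) + 1 := by
    conv_lhs => rw [hw]
    rw [des_append (P ++ inc) c (dec' ++ T), hdesPinc, hglPinc, if_pos hcgl]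
    omega
  refine ⟨?_, by rw [hdsw]; simp⟩
  cases T with
  | nil =>
    rw [h.hsc, append_nil, hdesP, hdsw, hdesw,
      show dec' ++ ([] : List ℕ) = dec' from append_nil _, hdesdec]
    omega
  | cons y T' =>
    have hbd := h.hbound y rfl
    have hypos : 0 < y := hpos y (by rw [h.hweq]; simp)
    have hdw : des w = dec'.length + des (y :: T') +
        (if y < (c :: dec').getLastD 0 then 1 else 0) + 1 := by
      rw [hdesw, show c :: (dec' ++ y :: T') = (c :: dec') ++ (y :: T') from rfl,
        des_append (c :: dec') y T', hdesdec]
    have hdc : des (swCompl w) = des (y :: T') + (if y < P.getLastD 0 then 1 else 0) := by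
      rw [h.hsc, des_append P y T', hdesP]
      omega
    have hmdec : (c :: dec').getLastD 0 ∈ c :: dec' := getLastD_mem (cons_ne_nil _ _) 0
    have hind : (if y < (c :: dec').getLastD 0 then 1 else 0)
        = (if y < P.getLastD 0 then 1 else 0 : ℕ) := by
      rcases hbd with hb | hb
      · rw [if_neg (by omega), if_neg]
        intro hcon
        cases hP : P with
        | nil => rw [hP] at hcon; simp [getLastD] at hcon
        | cons p0 P' =>
          have hglP : P.getLastD 0 ∈ P := getLastD_mem (by rw [hP]; simp) 0
          have := h.hPdec _ hglP _ hmdec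
          omega
      · have hPne : P ≠ [] := by
          rintro rfl
          simp [getLastD] at hb
          omega
        have hglP : P.getLastD 0 ∈ P := getLastD_mem hPne 0
        have hlt2 : P.getLastD 0 < (c :: dec').getLastD 0 := h.hPdec _ hglP _ hmdec
        have hne : y ≠ P.getLastD 0 := by
          intro he
          have hndw : (P ++ inc ++ (c :: dec') ++ (y :: T')).Nodup := h.hweq ▸ hnd
          rw [List.nodup_append] at hndw
          have h1 : P.getLastD 0 ∈ P ++ inc ++ c :: dec' :=
            mem_append_left _ (mem_append_left _ hglP)
          have h2 : P.getLastD 0 ∈ y :: T' := by rw [← he]; exact mem_cons_self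
          exact hndw.2.2 _ h1 _ h2 rfl
        rw [if_pos (by omega), if_pos (by omega)]
    rw [hdw, hdc, hdsw, hind]
    omega

lemma wd_ins {w P inc dec T : List ℕ} (h : WD w P inc dec T)
    (hpos : ∀ a ∈ w, 0 < a) : ins (swCompl w) (sw w) = w := by
  rw [h.hsc, h.hsw]
  have hchainP : List.Chain' (· < ·) P := h.hPinc.sublist (sublist_append_left P inc)
  have hm2 : (inc ++ dec).getLastD 0 = dec.getLastD 0 := getLastD_append_right h.hdec0 0
  have hmdec : (inc ++ dec).getLastD 0 ∈ dec := hm2 ▸ getLastD_mem h.hdec0 0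
  obtain ⟨E, hE, hEh⟩ := incrPrefix_append_exists T hchainP
  have htw : (incrPrefix (P ++ T)).takeWhile
      (fun u => decide (u < (inc ++ dec).getLastD 0)) = P := by
    rw [hE, takeWhile_append_of _ _ _ (fun u hu => by
      simpa using h.hPdec u hu _ hmdec)]
    suffices hEnil : E.takeWhile (fun u => decide (u < (inc ++ dec).getLastD 0)) = [] by
      rw [hEnil, append_nil]
    cases hEc : E with
    | nil => rfl
    | cons y E' =>
      have hyT : T.head? = some y := hEh y (by rw [hEc]; rfl)
      have hny : ¬ y < (inc ++ dec).getLastD 0 := by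
        rcases h.hbound y hyT with hb | hb
        · omega
        · exfalso
          have hyTmem : y ∈ T := by
            cases T with
            | nil => simp at hyT
            | cons a t =>
              simp only [head?_cons, Option.some.injEq] at hyT
              subst hyT
              exact mem_cons_self
          have hypos : 0 < y := hpos y (by rw [h.hweq]; simp [hyTmem])
          have hPne : P ≠ [] := by
            rintro rfl
            simp [getLastD] at hb
            omega
          have hchainPE : List.Chain' (· < ·) (P ++ E) := by
            rw [← hE]
            exact incrPrefix_chain _
          rw [hEc] at hchainPE
          have := chain_append_last_lt hchainPE hPne
          omega
      rw [takeWhile_cons_of_neg (by simpa using hny)]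
  simp only [ins]
  rw [htw, drop_left, h.hweq]
  simp


/-! ### hookify and wavify -/

def hookify (α : List ℕ) : List ℕ :=
  let l := α.insertionSort (· ≤ ·)
  match l.drop (des α) with
  | [] => []
  | a :: r => a :: (l.take (des α) ++ r)

def wavify (h : List ℕ) : List ℕ :=
  let l := h.insertionSort (· ≤ ·)
  l.drop (inv h) ++ (l.take (inv h)).reverse

lemma getLastD_indep {l : List ℕ} (h : l ≠ []) (d d' : ℕ) : l.getLastD d = l.getLastD d' := by
  rw [getLastD_eq_getLast?, getLastD_eq_getLast?, getLast?_eq_getLast h]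
  rfl

lemma hookify_spec {inc dec : List ℕ} (hinc : List.Chain' (· < ·) inc)
    (hdec : List.Chain' (· > ·) dec) (hinc0 : inc ≠ []) (hdec0 : dec ≠ [])
    (hlt : ∀ y ∈ dec, ∀ u ∈ inc, y < u) :
    IsHook (hookify (inc ++ dec)) ∧ hookify (inc ++ dec) ~ (inc ++ dec) ∧
    inv (hookify (inc ++ dec)) = des (inc ++ dec) ∧
    wavify (hookify (inc ++ dec)) = inc ++ dec := by
  obtain ⟨i0, inc', rfl⟩ : ∃ i0 inc', inc = i0 :: inc' := by
    cases inc with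
    | nil => exact absurd rfl hinc0
    | cons a b => exact ⟨a, b, rfl⟩
  obtain ⟨c, dec', rfl⟩ : ∃ c dec', dec = c :: dec' := by
    cases dec with
    | nil => exact absurd rfl hdec0
    | cons a b => exact ⟨a, b, rfl⟩
  set inc := i0 :: inc' with hincdef
  set dec := c :: dec' with hdecdef
  set l₀ := dec.reverse ++ inc with hl₀
  have hchain₀ : List.Chain' (· < ·) l₀ := by
    rw [hl₀, chain'_append]
    refine ⟨chain'_reverse.2 hdec, hinc, ?_⟩
    intro a ha b hb
    rw [getLast?_reverse] at ha
    have ha' : a ∈ dec := by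
      rw [hdecdef] at ha ⊢
      have h' : c = a := by simpa using ha
      subst h'
      exact mem_cons_self
    have hb' : b ∈ inc := by
      rw [hincdef] at hb ⊢
      have h' : i0 = b := by simpa using hb
      subst h'
      exact mem_cons_self
    exact hlt a ha' b hb'
  have hsorted₀ : List.Pairwise (· ≤ ·) l₀ :=
    (chain'_iff_pairwise.1 hchain₀).imp le_of_lt
  have hperm₀ : l₀ ~ inc ++ dec :=
    ((reverse_perm dec).append_right inc).trans perm_append_comm
  have hsort : (inc ++ dec).insertionSort (· ≤ ·) = l₀ :=
    ((perm_insertionSort _ _).trans hperm₀.symm).eq_of_pairwise'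
      (pairwise_insertionSort _ _) hsorted₀
  have hdesα : des (inc ++ dec) = dec.length := by
    rw [hdecdef, des_append inc c dec']
    have h1 : des inc = 0 := des_eq_zero_of_chain hinc
    have h2 : des (c :: dec') = dec'.length := by simpa [hdecdef] using des_of_chain_gt hdec
    have h3 : c < inc.getLastD 0 :=
      hlt c (mem_cons_self) _ (getLastD_mem (cons_ne_nil _ _) 0)
    rw [h1, h2, if_pos h3]
    simp
  have hlen : dec.reverse.length = dec.length := length_reverse
  have hdrop : l₀.drop dec.length = inc := by rw [hl₀, ← hlen, drop_left]
  have htake : l₀.take dec.length = dec.reverse := by rw [hl₀, ← hlen, take_left]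
  have hhook : hookify (inc ++ dec) = i0 :: (dec.reverse ++ inc') := by
    simp only [hookify]
    rw [hsort, hdesα, hdrop, htake, hincdef]
  have hchainsub : List.Chain' (· < ·) (dec.reverse ++ inc') := by
    refine hchain₀.sublist ?_
    rw [hl₀, hincdef]
    exact (append_sublist_append_left _).2 (sublist_cons_self i0 inc')
  have hpermh : hookify (inc ++ dec) ~ inc ++ dec := by
    rw [hhook]
    exact (perm_middle.symm.trans (by rw [hl₀, hincdef])).trans hperm₀
  obtain ⟨b, u, hbu⟩ : ∃ b u, dec.reverse = b :: u := by
    cases hr : dec.reverse with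
    | nil => exact absurd (reverse_eq_nil_iff.1 hr) (by rw [hdecdef]; exact cons_ne_nil _ _)
    | cons a t => exact ⟨a, t, rfl⟩
  have hb_lt : b < i0 := by
    have hbdec : b ∈ dec := mem_reverse.1 (hbu ▸ mem_cons_self)
    exact hlt b hbdec i0 (by rw [hincdef]; exact mem_cons_self)
  have hish : IsHook (hookify (inc ++ dec)) := by
    rw [hhook, hbu, cons_append]
    exact ⟨hb_lt, by rw [← cons_append, ← hbu]; exact hchainsub⟩
  have hinv : inv (hookify (inc ++ dec)) = dec.length := by
    rw [hhook]
    show (dec.reverse ++ inc').countP (fun x => decide (x < i0)) + inv (dec.reverse ++ inc')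
      = dec.length
    rw [inv_eq_zero_of_chain hchainsub, countP_append]
    have h1 : dec.reverse.countP (fun x => decide (x < i0)) = dec.reverse.length :=
      countP_eq_length.2 fun a ha => by
        simp only [decide_eq_true_eq]
        exact hlt a (mem_reverse.1 ha) i0 (by rw [hincdef]; exact mem_cons_self)
    have h2 : inc'.countP (fun x => decide (x < i0)) = 0 :=
      countP_eq_zero.2 fun a ha => by
        simp only [decide_eq_true_eq, not_lt]
        exact le_of_lt (rel_of_pairwise_cons (chain'_iff_pairwise.1 hinc) ha)
    rw [h1, h2, length_reverse]
    omega
  have hsort2 : (hookify (inc ++ dec)).insertionSort (· ≤ ·) = l₀ :=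
    ((perm_insertionSort _ _).trans (hpermh.trans hperm₀.symm)).eq_of_pairwise'
      (pairwise_insertionSort _ _) hsorted₀
  have hwav : wavify (hookify (inc ++ dec)) = inc ++ dec := by
    simp only [wavify]
    rw [hsort2, hinv, hdrop, htake, reverse_reverse]
  exact ⟨hish, hpermh, by rw [hinv, hdesα], hwav⟩



def decPrefix : List ℕ → List ℕ
  | [] => []
  | [a] => [a]
  | a :: b :: t => if b < a then a :: decPrefix (b :: t) else [a]

lemma decPrefix_append {L : List ℕ} (hL : L ≠ []) (hchain : List.Chain' (· > ·) L)
    {a : ℕ} {M : List ℕ} (ha : ¬ a < L.getLastD 0) : decPrefix (L ++ a :: M) = L := by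
  induction L with
  | nil => exact absurd rfl hL
  | cons x L' ih =>
    cases L' with
    | nil =>
      show decPrefix (x :: a :: M) = [x]
      rw [decPrefix, if_neg (by simpa [getLastD] using ha)]
    | cons y L'' =>
      rw [chain'_cons] at hchain
      show decPrefix (x :: y :: (L'' ++ a :: M)) = x :: y :: L''
      have hih := ih (cons_ne_nil _ _) hchain.2 (by rwa [getLastD_cons] at ha)
      rw [cons_append] at hih
      rw [decPrefix, if_pos hchain.1, hih]

def lastHookSplit (τ : List ℕ) : List ℕ × List ℕ :=
  ((τ.reverse.drop ((decPrefix τ.reverse).length + 1)).reverse,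
   (τ.reverse.take ((decPrefix τ.reverse).length + 1)).reverse)

lemma isHook_shape {h : List ℕ} (hh : IsHook h) : ∃ a b t, h = a :: b :: t := by
  cases h with
  | nil => exact absurd hh (by simp [IsHook])
  | cons a h' =>
    cases h' with
    | nil => exact absurd hh (by simp [IsHook])
    | cons b t => exact ⟨a, b, t, rfl⟩

lemma lastHookSplit_eq (u : List ℕ) {h : List ℕ} (hh : IsHook h) :
    lastHookSplit (u ++ h) = (u, h) := by
  obtain ⟨a, b, t, rfl⟩ := isHook_shape hh
  obtain ⟨hba, hcht⟩ := hh
  have hrev : (u ++ a :: b :: t).reverse = ((b :: t).reverse) ++ a :: u.reverse := by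
    rw [reverse_append, reverse_cons, append_assoc, singleton_append]
  have hchrev : List.Chain' (· > ·) ((b :: t).reverse) := by
    rw [chain'_reverse]
    exact hcht
  have hgl : ((b :: t).reverse).getLastD 0 = b := by
    rw [getLastD_eq_getLast?, getLast?_reverse]
    rfl
  have hdp : decPrefix ((u ++ a :: b :: t).reverse) = (b :: t).reverse := by
    rw [hrev]
    exact decPrefix_append (by simp) hchrev (by rw [hgl]; omega)
  have hlenL : ((b :: t).reverse).length = t.length + 1 := by simp
  simp only [lastHookSplit, Prod.mk.injEq]
  rw [hdp, hrev, hlenL]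
  constructor
  · rw [show t.length + 1 + 1 = ((b :: t).reverse).length + 1 by rw [hlenL], drop_append]
    simp
  · rw [show t.length + 1 + 1 = ((b :: t).reverse).length + 1 by rw [hlenL], take_append]
    simp

lemma des_append_hook_ne_zero (u : List ℕ) {h : List ℕ} (hh : IsHook h) :
    des (u ++ h) ≠ 0 := by
  obtain ⟨a, b, t, rfl⟩ := isHook_shape hh
  obtain ⟨hba, _⟩ := hh
  rw [des_append u a (b :: t), des_cons₂, if_pos hba]
  omega



def fW : ℕ → List ℕ → List ℕ × List (List ℕ)
  | 0, w => (w, [])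
  | (fuel+1), w =>
    if des w = 0 then (w, [])
    else ((fW fuel (swCompl w)).1, (fW fuel (swCompl w)).2 ++ [hookify (sw w)])

def fList (fuel : ℕ) (w : List ℕ) : List ℕ := (fW fuel w).1 ++ (fW fuel w).2.flatten

def gW : ℕ → List ℕ → List ℕ
  | 0, τ => τ
  | (fuel+1), τ =>
    if des τ = 0 then τ
    else ins (gW fuel (lastHookSplit τ).1) (wavify (lastHookSplit τ).2)

theorem main (fuel : ℕ) : ∀ w : List ℕ, w.length ≤ fuel → w.Nodup → (∀ a ∈ w, 0 < a) →
    IsHookFact (fList fuel w) (fW fuel w).1 (fW fuel w).2 ∧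
    des w = lecVal (fW fuel w).2 ∧
    ((fW fuel w).2.getLastD (fW fuel w).1) ~ (sw w) ∧
    fList fuel w ~ w ∧
    gW fuel (fList fuel w) = w := by
  induction fuel with
  | zero =>
    intro w hlen hnd hpos
    have hw : w = [] := eq_nil_of_length_eq_zero (Nat.le_zero.1 hlen)
    subst hw
    have hsw : sw ([] : List ℕ) = [] := sw_eq_self rfl
    refine ⟨⟨by simp [fW, Incr], by simp [fW], by simp [fW, fList]⟩, by simp [fW, lecVal], ?_, ?_, rfl⟩
    · simp [fW, hsw]
    · simp [fList, fW]
  | succ fuel ih =>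
    intro w hlen hnd hpos
    by_cases h0 : des w = 0
    · have hfw : fW (fuel + 1) w = (w, []) := by simp [fW, h0]
      have hflist : fList (fuel + 1) w = w := by simp [fList, hfw]
      have hchain : List.Chain' (· < ·) w := chain_of_des_eq_zero h0 hnd
      have hswId : sw w = w := sw_eq_self (by rw [incrPrefix_eq_self hchain, drop_length])
      rw [hflist, hfw]
      exact ⟨⟨hchain, by simp, by simp⟩, by simp [lecVal, h0], by simp [hswId],
        Perm.refl w, by simp [gW, h0, hflist]⟩
    · obtain ⟨P, inc, dec, T, hwd⟩ := wd_exists h0 hnd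
      have hsub : P ++ T <+ w := by
        rw [hwd.hweq]
        exact Sublist.append ((sublist_append_left P inc).trans
          (sublist_append_left (P ++ inc) dec)) (Sublist.refl T)
      have hndw' : (swCompl w).Nodup := by rw [hwd.hsc]; exact hnd.sublist hsub
      have hposw' : ∀ a ∈ swCompl w, 0 < a := by
        rw [hwd.hsc]
        exact fun a ha => hpos a (hsub.subset ha)
      have hlenw' : (swCompl w).length ≤ fuel := by
        rw [hwd.hsc]
        have hlw := congrArg List.length hwd.hweq
        have h1 : 0 < inc.length := length_pos_iff.2 hwd.hinc0
        have h2 : 0 < dec.length := length_pos_iff.2 hwd.hdec0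
        simp only [length_append] at hlw ⊢
        omega
      obtain ⟨ihHF, ihdes, ihlast, ihpermw, ihg⟩ := ih (swCompl w) hlenw' hndw' hposw'
      have hchainInc : List.Chain' (· < ·) inc := hwd.hPinc.sublist (sublist_append_right P inc)
      obtain ⟨hish, hpermh, hinvh, hwavh⟩ :=
        hookify_spec hchainInc hwd.hdec hwd.hinc0 hwd.hdec0 hwd.hlt
      rw [← hwd.hsw] at hish hpermh hinvh hwavh
      have hfw : fW (fuel + 1) w
          = ((fW fuel (swCompl w)).1, (fW fuel (swCompl w)).2 ++ [hookify (sw w)]) := by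
        simp [fW, h0]
      have hflist : fList (fuel + 1) w = fList fuel (swCompl w) ++ hookify (sw w) := by
        simp only [fList, hfw, flatten_append, flatten_cons, flatten_nil, append_nil,
          append_assoc]
      have hdes2 := wd_des hwd hnd hpos
      have hpermflist : fList (fuel + 1) w ~ w := by
        rw [hflist]
        refine (ihpermw.append hpermh).trans ?_
        rw [hwd.hsc, hwd.hsw, hwd.hweq]
        calc P ++ T ++ (inc ++ dec)
            ~ P ++ (T ++ (inc ++ dec)) := by rw [append_assoc]
          _ ~ P ++ ((inc ++ dec) ++ T) := Perm.append_left P perm_append_comm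
          _ ~ P ++ inc ++ dec ++ T := by simp [append_assoc]
      refine ⟨?_, ?_, ?_, hpermflist, ?_⟩
      · refine ⟨?_, ?_, ?_⟩
        · rw [hfw]
          exact ihHF.1
        · rw [hfw]
          intro h hh
          rcases mem_append.1 hh with h1 | h1
          · exact ihHF.2.1 h h1
          · rw [mem_singleton.1 h1]
            exact hish
        · rw [hfw, hflist, ihHF.2.2]
          simp [flatten_append, append_assoc]
      · rw [hfw]
        simp only [lecVal, map_append, map_cons, map_nil, sum_append, sum_cons, sum_nil]
        rw [← lecVal, ← ihdes, hinvh, hdes2.1]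
        omega
      · rw [hfw]
        simp only [getLastD_concat]
        exact hpermh
      · rw [hflist]
        have hne := des_append_hook_ne_zero (fList fuel (swCompl w)) hish
        rw [gW, if_neg hne, lastHookSplit_eq _ hish]
        show ins (gW fuel (fList fuel (swCompl w))) (wavify (hookify (sw w))) = w
        rw [ihg, hwavh]
        exact wd_ins hwd hpos



lemma word_length {n : ℕ} (σ : Equiv.Perm (Fin n)) : (word σ).length = n := by simp [word]

lemma word_nodup {n : ℕ} (σ : Equiv.Perm (Fin n)) : (word σ).Nodup := by
  rw [word, nodup_ofFn]
  intro i j h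
  simp only [add_left_inj] at h
  exact σ.injective (Fin.val_injective h)

lemma word_mem {n : ℕ} (σ : Equiv.Perm (Fin n)) : ∀ a ∈ word σ, 1 ≤ a ∧ a ≤ n := by
  intro a ha
  rw [word, mem_ofFn] at ha
  obtain ⟨i, rfl⟩ := ha
  have := (σ i).isLt
  show 1 ≤ (σ i : ℕ) + 1 ∧ (σ i : ℕ) + 1 ≤ n
  omega

lemma word_pos {n : ℕ} (σ : Equiv.Perm (Fin n)) : ∀ a ∈ word σ, 0 < a :=
  fun a ha => (word_mem σ a ha).1

lemma word_inj {n : ℕ} : Function.Injective (word (n := n)) := by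
  intro σ τ h
  have h2 := ofFn_injective h
  ext i
  have h3 := congrFun h2 i
  simp only [add_left_inj] at h3
  exact h3

noncomputable def permOfList {n : ℕ} (v : List ℕ) (hlen : v.length = n) (hnd : v.Nodup)
    (hmem : ∀ a ∈ v, 1 ≤ a ∧ a ≤ n) : Equiv.Perm (Fin n) :=
  Equiv.ofBijective
    (fun i => (⟨v.get (Fin.cast hlen.symm i) - 1, by
      have h := hmem (v.get (Fin.cast hlen.symm i))
        (v.get_mem (Fin.cast hlen.symm i))
      omega⟩ : Fin n))
    (Finite.injective_iff_bijective.1 (by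
      intro i j hij
      have hval : v.get (Fin.cast hlen.symm i) - 1 = v.get (Fin.cast hlen.symm j) - 1 :=
        congrArg Fin.val hij
      have hi := hmem (v.get (Fin.cast hlen.symm i))
        (v.get_mem (Fin.cast hlen.symm i))
      have hj := hmem (v.get (Fin.cast hlen.symm j))
        (v.get_mem (Fin.cast hlen.symm j))
      have heq : v.get (Fin.cast hlen.symm i) = v.get (Fin.cast hlen.symm j) := by omega
      have h2 := nodup_iff_injective_get.1 hnd heq
      exact Fin.ext (by simpa using congrArg Fin.val h2)))

lemma word_permOfList {n : ℕ} (v : List ℕ) (hlen : v.length = n) (hnd : v.Nodup)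
    (hmem : ∀ a ∈ v, 1 ≤ a ∧ a ≤ n) :
    word (permOfList v hlen hnd hmem) = v := by
  rw [word]
  refine ext_get (by simp [hlen]) ?_
  intro k h1 h2
  rw [get_ofFn]
  show v.get ⟨k, h2⟩ - 1 + 1 = v.get ⟨k, h2⟩
  have hmem' := hmem _ (v.get_mem ⟨k, h2⟩)
  omega

/-- the data produced by `main` for `word σ` -/
lemma main_word {n : ℕ} (σ : Equiv.Perm (Fin n)) :
    IsHookFact (fList n (word σ)) (fW n (word σ)).1 (fW n (word σ)).2 ∧
    des (word σ) = lecVal (fW n (word σ)).2 ∧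
    ((fW n (word σ)).2.getLastD (fW n (word σ)).1) ~ (sw (word σ)) ∧
    fList n (word σ) ~ word σ ∧
    gW n (fList n (word σ)) = word σ :=
  main n (word σ) (le_of_eq (word_length σ)) (word_nodup σ) (word_pos σ)

noncomputable def Fp {n : ℕ} (σ : Equiv.Perm (Fin n)) : Equiv.Perm (Fin n) :=
  permOfList (fList n (word σ))
    ((main_word σ).2.2.2.1.length_eq.trans (word_length σ))
    ((main_word σ).2.2.2.1.nodup_iff.2 (word_nodup σ))
    (fun a ha => word_mem σ a ((main_word σ).2.2.2.1.subset ha))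

lemma word_Fp {n : ℕ} (σ : Equiv.Perm (Fin n)) : word (Fp σ) = fList n (word σ) :=
  word_permOfList _ _ _ _

lemma Fp_inj {n : ℕ} : Function.Injective (Fp (n := n)) := by
  intro σ τ h
  have h2 : fList n (word σ) = fList n (word τ) := by
    rw [← word_Fp, ← word_Fp, h]
  have h3 := congrArg (gW n) h2
  rw [(main_word σ).2.2.2.2, (main_word τ).2.2.2.2] at h3
  exact word_inj h3



end Paper
/-- for every `n` there is a bijection `ψ` of `S_n` such that for every `σ`,
`des σ = lec (ψ σ)` and the rightmost hook of the hook factorization of `ψ σ` has the same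
length and the same set of entries as the special wave `sw σ`. -/
theorem Paper.statement15 (n : ℕ) :
    ∃ ψ : Equiv.Perm (Fin n) ≃ Equiv.Perm (Fin n),
      ∀ σ : Equiv.Perm (Fin n), ∃ γ hs,
        IsHookFact (word (ψ σ)) γ hs ∧
        des (word σ) = lecVal hs ∧
        (hs.getLastD γ).length = (sw (word σ)).length ∧
        (hs.getLastD γ).toFinset = (sw (word σ)).toFinset := by
  refine ⟨Equiv.ofBijective Fp (Finite.injective_iff_bijective.1 Fp_inj), fun σ => ?_⟩
  refine ⟨(fW n (word σ)).1, (fW n (word σ)).2, ?_, (main_word σ).2.1, ?_, ?_⟩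
  · rw [Equiv.ofBijective_apply, word_Fp]
    exact (main_word σ).1
  · exact (main_word σ).2.2.1.length_eq
  · exact List.toFinset_eq_of_perm _ _ (main_word σ).2.2.1
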